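/- Let ξ = (ξ_1,…,ξ_d) be an integrable random vector, not identically zero, which is either jointly self-dual (i.e. E(u_0 + u_1ξ_1 + ⋯ + u_dξ_d)_+ is invariant under all permutations of (u_0, u_1, …, u_d)) or lift swap-invariant (i.e. E|u_0 + u_1ξ_1 + ⋯ + u_dξ_d| is invariant under all permutations of (u_0, u_1, …, u_d)) with Eξ_i = 1 for some i. Then every component ξ_j is almost surely strictly positive and Eξ_j = 1 for all j = 1,…,d. -/

import Mathlib

open MeasureTheory ProbabilityTheory Filter

section Aux

variable {Ω : Type*} [MeasureSpace Ω] [IsProbabilityMeasure (ℙ : Measure Ω)] {d : ℕ}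

private lemma max_split' (y : ℝ) : max y 0 = y + max (-y) 0 := by
  rcases le_total 0 y with h | h
  · rw [max_eq_left h, max_eq_right (by linarith)]; ring
  · rw [max_eq_right h, max_eq_left (by linarith)]; ring

private lemma abs_split' (y : ℝ) : |y| = 2 * max y 0 - y := by
  rcases le_total 0 y with h | h
  · rw [abs_of_nonneg h, max_eq_left h]; ring
  · rw [abs_of_nonpos h, max_eq_right h]; ring

private lemma sum_coeff (c : ℝ) (j : Fin d) (x : Fin d → ℝ) (v : Fin (d+1) → ℝ)
    (hj : v j.succ = c) (ho : ∀ k : Fin d, k ≠ j → v k.succ = 0) :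
    ∑ i : Fin d, v i.succ * x i = c * x j := by
  rw [Finset.sum_eq_single j (fun k _ hk => by rw [ho k hk, zero_mul])
    (fun h => absurd (Finset.mem_univ j) h), hj]

private lemma master1 (f : ℝ → ℝ) (ξ : Ω → Fin d → ℝ)
    (H : ∀ (u : Fin (d+1) → ℝ) (σ : Equiv.Perm (Fin (d+1))),
        ∫ ω, f (u 0 + ∑ i : Fin d, u i.succ * ξ ω i) =
        ∫ ω, f (u (σ 0) + ∑ i : Fin d, u (σ i.succ) * ξ ω i))
    (a b : ℝ) (j : Fin d) :
    ∫ ω, f (a + b * ξ ω j) = ∫ ω, f (b + a * ξ ω j) := by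
  set u : Fin (d+1) → ℝ := fun k => if k = 0 then a else if k = j.succ then b else 0 with hu
  have h := H u (Equiv.swap 0 j.succ)
  have h0 : u 0 = a := by simp [hu]
  have hj : u j.succ = b := by simp [hu, Fin.succ_ne_zero j]
  have ho : ∀ k : Fin d, k ≠ j → u k.succ = 0 := fun k hk => by
    simp [hu, Fin.succ_ne_zero k, Fin.succ_inj, hk]
  have hs0 : u ((Equiv.swap (0 : Fin (d+1)) j.succ) 0) = b := by
    rw [Equiv.swap_apply_left]; exact hj
  have hsj : u ((Equiv.swap (0 : Fin (d+1)) j.succ) j.succ) = a := by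
    rw [Equiv.swap_apply_right]; exact h0
  have hso : ∀ k : Fin d, k ≠ j → u ((Equiv.swap (0 : Fin (d+1)) j.succ) k.succ) = 0 := by
    intro k hk
    rw [Equiv.swap_apply_of_ne_of_ne (Fin.succ_ne_zero k) (by simpa [Fin.succ_inj] using hk)]
    exact ho k hk
  calc ∫ ω, f (a + b * ξ ω j)
      = ∫ ω, f (u 0 + ∑ i : Fin d, u i.succ * ξ ω i) := by
        refine integral_congr_ae (Filter.Eventually.of_forall fun ω => ?_)
        simp only [h0, sum_coeff b j (ξ ω) u hj ho]
    _ = ∫ ω, f (u ((Equiv.swap 0 j.succ) 0) + ∑ i : Fin d, u ((Equiv.swap 0 j.succ) i.succ) * ξ ω i) := h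
    _ = ∫ ω, f (b + a * ξ ω j) := by
        refine integral_congr_ae (Filter.Eventually.of_forall fun ω => ?_)
        simp only [hs0, sum_coeff a j (ξ ω) (fun m => u ((Equiv.swap 0 j.succ) m)) hsj hso]

private lemma master2 (f : ℝ → ℝ) (ξ : Ω → Fin d → ℝ)
    (H : ∀ (u : Fin (d+1) → ℝ) (σ : Equiv.Perm (Fin (d+1))),
        ∫ ω, f (u 0 + ∑ i : Fin d, u i.succ * ξ ω i) =
        ∫ ω, f (u (σ 0) + ∑ i : Fin d, u (σ i.succ) * ξ ω i))
    (a b : ℝ) (i j : Fin d) :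
    ∫ ω, f (a + b * ξ ω j) = ∫ ω, f (a + b * ξ ω i) := by
  rcases eq_or_ne i j with rfl | hij
  · rfl
  set u : Fin (d+1) → ℝ := fun k => if k = 0 then a else if k = j.succ then b else 0 with hu
  have h := H u (Equiv.swap i.succ j.succ)
  have h0 : u 0 = a := by simp [hu]
  have hj : u j.succ = b := by simp [hu, Fin.succ_ne_zero j]
  have ho : ∀ k : Fin d, k ≠ j → u k.succ = 0 := fun k hk => by
    simp [hu, Fin.succ_ne_zero k, Fin.succ_inj, hk]
  have hs0 : u ((Equiv.swap i.succ j.succ) 0) = a := by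
    rw [Equiv.swap_apply_of_ne_of_ne (Fin.succ_ne_zero i).symm (Fin.succ_ne_zero j).symm]
    exact h0
  have hsi : u ((Equiv.swap i.succ j.succ) i.succ) = b := by
    rw [Equiv.swap_apply_left]; exact hj
  have hso : ∀ k : Fin d, k ≠ i → u ((Equiv.swap i.succ j.succ) k.succ) = 0 := by
    intro k hk
    rcases eq_or_ne k j with rfl | hkj
    · rw [Equiv.swap_apply_right]; exact ho i hij
    · rw [Equiv.swap_apply_of_ne_of_ne (by simpa [Fin.succ_inj] using hk)
        (by simpa [Fin.succ_inj] using hkj)]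
      exact ho k hkj
  calc ∫ ω, f (a + b * ξ ω j)
      = ∫ ω, f (u 0 + ∑ i : Fin d, u i.succ * ξ ω i) := by
        refine integral_congr_ae (Filter.Eventually.of_forall fun ω => ?_)
        simp only [h0, sum_coeff b j (ξ ω) u hj ho]
    _ = ∫ ω, f (u ((Equiv.swap i.succ j.succ) 0) + ∑ k : Fin d, u ((Equiv.swap i.succ j.succ) k.succ) * ξ ω k) := h
    _ = ∫ ω, f (a + b * ξ ω i) := by
        refine integral_congr_ae (Filter.Eventually.of_forall fun ω => ?_)
        simp only [hs0, sum_coeff b i (ξ ω) (fun m => u ((Equiv.swap i.succ j.succ) m)) hsi hso]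

private lemma int_max_congr (g h : Ω → ℝ) (hgh : ∀ ω, g ω = h ω) :
    ∫ ω, max (g ω) 0 = ∫ ω, max (h ω) 0 :=
  integral_congr_ae (Filter.Eventually.of_forall fun ω => by simp only [hgh ω])

private lemma int_posPart_sub (Y : Ω → ℝ) (hY : Integrable Y) :
    ∫ ω, max (Y ω) 0 = (∫ ω, Y ω) + ∫ ω, max (-Y ω) 0 := by
  have h2 : Integrable (fun ω => max (-Y ω) 0) := hY.neg.pos_part
  rw [← integral_add hY h2]
  exact integral_congr_ae (Filter.Eventually.of_forall fun ω => max_split' _)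

private lemma int_abs_decomp (Y : Ω → ℝ) (hY : Integrable Y) :
    ∫ ω, |Y ω| = 2 * (∫ ω, max (Y ω) 0) - ∫ ω, Y ω := by
  have h2 : Integrable (fun ω => 2 * max (Y ω) 0) := hY.pos_part.const_mul 2
  rw [← integral_const_mul, ← integral_sub h2 hY]
  exact integral_congr_ae (Filter.Eventually.of_forall fun ω => abs_split' _)

private lemma tail_posPart (X : Ω → ℝ) (hm : Measurable X) (hi : Integrable X) :
    Tendsto (fun n : ℕ => ∫ ω, max (X ω - n) 0) atTop (nhds 0) := by
  have h := tendsto_integral_of_dominated_convergence (μ := (ℙ : Measure Ω))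
      (F := fun (n : ℕ) ω => max (X ω - n) 0) (f := fun _ => (0 : ℝ))
      (bound := fun ω => |X ω|)
      (fun n => ((hm.sub measurable_const).max measurable_const).aestronglyMeasurable)
      hi.abs
      (fun n => Eventually.of_forall fun ω => ?_)
      (Eventually.of_forall fun ω => ?_)
  · simpa using h
  · beta_reduce
    rw [Real.norm_eq_abs, abs_of_nonneg (le_max_right _ _)]
    rcases le_total (X ω - n) 0 with hc | hc
    · rw [max_eq_right hc]; positivity
    · rw [max_eq_left hc]
      have : (0:ℝ) ≤ n := Nat.cast_nonneg n
      calc X ω - n ≤ X ω := by linarith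
        _ ≤ |X ω| := le_abs_self _
  · apply tendsto_const_nhds.congr'
    filter_upwards [eventually_ge_atTop ⌈X ω⌉₊] with n hn
    have : X ω - n ≤ 0 := by
      have h1 : X ω ≤ ⌈X ω⌉₊ := Nat.le_ceil _
      have h2 : (⌈X ω⌉₊ : ℝ) ≤ n := Nat.cast_le.mpr hn
      linarith
    rw [max_eq_right this]

private lemma tail_indicator (X : Ω → ℝ) (hm : Measurable X) (hi : Integrable X) :
    Tendsto (fun n : ℕ => ∫ ω, Set.indicator {ω | (n:ℝ)+1 ≤ X ω} X ω) atTop (nhds 0) := by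
  have h := tendsto_integral_of_dominated_convergence (μ := (ℙ : Measure Ω))
      (F := fun (n : ℕ) ω => Set.indicator {ω | (n:ℝ)+1 ≤ X ω} X ω) (f := fun _ => (0 : ℝ))
      (bound := fun ω => |X ω|)
      (fun n => ((hm.indicator (measurableSet_le measurable_const hm))).aestronglyMeasurable)
      hi.abs
      (fun n => Eventually.of_forall fun ω => ?_)
      (Eventually.of_forall fun ω => ?_)
  · simpa using h
  · beta_reduce
    rw [Real.norm_eq_abs]
    by_cases hc : ω ∈ {ω | (n:ℝ)+1 ≤ X ω}
    · rw [Set.indicator_of_mem hc]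
    · rw [Set.indicator_of_notMem hc]; simp
  · apply tendsto_const_nhds.congr'
    filter_upwards [eventually_ge_atTop ⌈X ω⌉₊] with n hn
    have hc : ω ∉ {ω | (n:ℝ)+1 ≤ X ω} := by
      simp only [Set.mem_setOf_eq, not_le]
      have h1 : X ω ≤ ⌈X ω⌉₊ := Nat.le_ceil _
      have h2 : (⌈X ω⌉₊ : ℝ) ≤ n := Nat.cast_le.mpr hn
      linarith
    rw [Set.indicator_of_notMem hc]

private lemma pos_of_eps (X : Ω → ℝ) (hm : Measurable X) (hi : Integrable X)
    (hnn : ∀ᵐ ω, 0 ≤ X ω)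
    (key : ∀ ε : ℝ, 0 < ε → ∫ ω, max (ε - X ω) 0 = ∫ ω, max (ε * X ω - 1) 0) :
    ∀ᵐ ω, 0 < X ω := by
  set p : ℝ := (ℙ {ω | X ω ≤ 0}).toReal with hp
  have hsmeas : MeasurableSet {ω | X ω ≤ 0} := measurableSet_le hm measurable_const
  have hstep : ∀ n : ℕ, p ≤ ∫ ω, Set.indicator {ω | (n:ℝ)+1 ≤ X ω} X ω := by
    intro n
    set ε : ℝ := 1 / ((n:ℝ)+1) with hε
    have hεpos : 0 < ε := by positivity
    have h1 : ε * p ≤ ∫ ω, max (ε - X ω) 0 := by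
      have hind : ∫ ω, Set.indicator {ω | X ω ≤ 0} (fun _ => ε) ω = ε * p := by
        rw [integral_indicator_const ε hsmeas, smul_eq_mul, mul_comm]
        rfl
      rw [← hind]
      refine integral_mono_ae ((integrable_const ε).indicator hsmeas)
        ((integrable_const ε).sub hi).pos_part ?_
      filter_upwards [hnn] with ω hω
      by_cases hc : ω ∈ {ω | X ω ≤ 0}
      · have hX0 : X ω = 0 := le_antisymm hc hω
        rw [Set.indicator_of_mem hc, hX0]
        simp [le_max_iff, hεpos.le]
      · rw [Set.indicator_of_notMem hc]
        exact le_max_right _ _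
    have h2 := key ε hεpos
    have h3 : ∫ ω, max (ε * X ω - 1) 0 ≤ ∫ ω, ε * Set.indicator {ω | (n:ℝ)+1 ≤ X ω} X ω := by
      refine integral_mono ((hi.const_mul ε).sub (integrable_const 1)).pos_part
        ((hi.indicator (measurableSet_le measurable_const hm)).const_mul ε) ?_
      intro ω
      beta_reduce
      by_cases hc : ω ∈ {ω | (n:ℝ)+1 ≤ X ω}
      · rw [Set.indicator_of_mem hc]
        have hXω : (n:ℝ)+1 ≤ X ω := hc
        have hεX : 0 ≤ ε * X ω := by
          have : (0:ℝ) ≤ X ω := le_trans (by positivity) hXω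
          positivity
        rcases le_total (ε * X ω - 1) 0 with hc2 | hc2
        · rw [max_eq_right hc2]; exact hεX
        · rw [max_eq_left hc2]; linarith
      · rw [Set.indicator_of_notMem hc]
        have hXω : X ω < (n:ℝ)+1 := not_le.mp hc
        have : ε * X ω - 1 < 0 := by
          rw [hε]
          have h4 : (0:ℝ) < (n:ℝ)+1 := by positivity
          rw [div_mul_eq_mul_div, one_mul, sub_neg, div_lt_one h4]
          exact hXω
        rw [max_eq_right this.le, mul_zero]
    rw [integral_const_mul] at h3
    have h5 := le_trans h1 (le_of_eq h2)
    have h6 := le_trans h5 h3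
    exact le_of_mul_le_mul_left h6 hεpos
  have hple : p ≤ 0 := ge_of_tendsto' (tail_indicator X hm hi) hstep
  have hp0 : ℙ {ω | X ω ≤ 0} = 0 := by
    have := (ENNReal.toReal_eq_zero_iff _).mp (le_antisymm hple ENNReal.toReal_nonneg)
    rcases this with h | h
    · exact h
    · exact absurd h (measure_ne_top _ _)
  filter_upwards [measure_eq_zero_iff_ae_notMem.mp hp0] with ω hω
  exact lt_of_not_ge hω

end Aux

/-- **Proposition 5.2.** If a non-trivial integrable random vector `ξ` is either
jointly self-dual (invariance of `E(u₀ + u₁ξ₁ + ⋯ + u_dξ_d)₊` under all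
permutations of `(u₀, …, u_d)`) or lift swap-invariant (same with `|·|` in place
of `(·)₊`) with `Eξ_i = 1` for some `i`, then all its components are almost surely
strictly positive and have expectation one. -/
theorem selfDual_or_liftSwapInvariant_positive
    {d : ℕ} {Ω : Type*} [MeasureSpace Ω] [IsProbabilityMeasure (ℙ : Measure Ω)]
    (ξ : Ω → Fin d → ℝ) (hξm : Measurable ξ) (hξ : Integrable ξ)
    (hnz : ¬ ∀ᵐ ω, ξ ω = 0)
    (h : (∀ (u : Fin (d + 1) → ℝ) (σ : Equiv.Perm (Fin (d + 1))),
            ∫ ω, max (u 0 + ∑ i : Fin d, u i.succ * ξ ω i) 0 =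
              ∫ ω, max (u (σ 0) + ∑ i : Fin d, u (σ i.succ) * ξ ω i) 0) ∨
        ((∀ (u : Fin (d + 1) → ℝ) (σ : Equiv.Perm (Fin (d + 1))),
            ∫ ω, |u 0 + ∑ i : Fin d, u i.succ * ξ ω i| =
              ∫ ω, |u (σ 0) + ∑ i : Fin d, u (σ i.succ) * ξ ω i|) ∧
          ∃ i : Fin d, ∫ ω, ξ ω i = 1)) :
    ∀ j : Fin d, (∀ᵐ ω, 0 < ξ ω j) ∧ ∫ ω, ξ ω j = 1 := by
  have hIm : ∀ k : Fin d, Measurable (fun ω => ξ ω k) :=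
    fun k => (measurable_pi_apply k).comp hξm
  have hIi : ∀ k : Fin d, Integrable (fun ω => ξ ω k) :=
    fun k => (ContinuousLinearMap.proj (R := ℝ) k).integrable_comp hξ
  intro j
  suffices h' : (∀ᵐ ω, 0 ≤ ξ ω j) ∧ (∫ ω, ξ ω j = 1) ∧
      (∀ ε : ℝ, 0 < ε → ∫ ω, max (ε - ξ ω j) 0 = ∫ ω, max (ε * ξ ω j - 1) 0) by
    obtain ⟨h1, h2, h3⟩ := h'
    exact ⟨pos_of_eps _ (hIm j) (hIi j) h1 h3, h2⟩
  rcases h with hsd | ⟨hsw, i, hEi⟩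
  · -- jointly self-dual case
    have A1 : ∫ ω, max (ξ ω j) 0 = 1 := by
      have A : ∫ ω, max ((0:ℝ) + 1 * ξ ω j) 0 = ∫ ω, max ((1:ℝ) + 0 * ξ ω j) 0 :=
        master1 (fun x => max x 0) ξ hsd 0 1 j
      simp only [zero_add, one_mul, zero_mul, add_zero] at A
      rw [A, integral_const]
      simp
    have A2 : ∫ ω, max (-ξ ω j) 0 = 0 := by
      have A : ∫ ω, max ((-1:ℝ) + 0 * ξ ω j) 0 = ∫ ω, max ((0:ℝ) + (-1) * ξ ω j) 0 :=
        master1 (fun x => max x 0) ξ hsd (-1) 0 j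
      simp only [zero_add, zero_mul, add_zero, neg_one_mul] at A
      rw [← A, integral_const]
      simp
    have hnneg : ∀ᵐ ω, 0 ≤ ξ ω j := by
      have h0 := (integral_eq_zero_iff_of_nonneg_ae
        (Filter.Eventually.of_forall fun ω => le_max_right _ _) (hIi j).neg.pos_part).mp A2
      filter_upwards [h0] with ω hω
      have h1 : -ξ ω j ≤ max (-ξ ω j) 0 := le_max_left _ _
      have h2 : max (-ξ ω j) 0 = 0 := hω
      linarith
    have hExp : ∫ ω, ξ ω j = 1 := by
      have : ∫ ω, ξ ω j = ∫ ω, max (ξ ω j) 0 := by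
        refine integral_congr_ae ?_
        filter_upwards [hnneg] with ω hω
        exact (max_eq_left hω).symm
      rw [this, A1]
    refine ⟨hnneg, hExp, fun ε hε => ?_⟩
    have A : ∫ ω, max (-ε + 1 * ξ ω j) 0 = ∫ ω, max ((1:ℝ) + (-ε) * ξ ω j) 0 :=
      master1 (fun x => max x 0) ξ hsd (-ε) 1 j
    have hY1 : Integrable (fun ω => -ε + 1 * ξ ω j) :=
      (integrable_const (-ε)).add ((hIi j).const_mul 1)
    have hY2 : Integrable (fun ω => (1:ℝ) + (-ε) * ξ ω j) :=
      (integrable_const 1).add ((hIi j).const_mul (-ε))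
    have L1 : ∫ ω, max (-ε + 1 * ξ ω j) 0
        = (∫ ω, (-ε + 1 * ξ ω j)) + ∫ ω, max (ε - ξ ω j) 0 := by
      rw [int_posPart_sub _ hY1]
      congr 1
      exact int_max_congr _ _ (fun ω => by ring)
    have L2 : ∫ ω, max ((1:ℝ) + (-ε) * ξ ω j) 0
        = (∫ ω, ((1:ℝ) + (-ε) * ξ ω j)) + ∫ ω, max (ε * ξ ω j - 1) 0 := by
      rw [int_posPart_sub _ hY2]
      congr 1
      exact int_max_congr _ _ (fun ω => by ring)
    have E1 : ∫ ω, (-ε + 1 * ξ ω j) = 1 - ε := by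
      rw [integral_add (integrable_const (-ε)) ((hIi j).const_mul 1), integral_const,
        integral_const_mul, hExp]
      simp
      try ring
    have E2 : ∫ ω, ((1:ℝ) + (-ε) * ξ ω j) = 1 - ε := by
      rw [integral_add (integrable_const 1) ((hIi j).const_mul (-ε)), integral_const,
        integral_const_mul, hExp]
      simp
      try ring
    rw [L1, L2, E1, E2] at A
    linarith
  · -- lift swap-invariant case
    have habs : ∀ k : Fin d, ∫ ω, |ξ ω k| = 1 := by
      intro k
      have A : ∫ ω, |(0:ℝ) + 1 * ξ ω k| = ∫ ω, |(1:ℝ) + 0 * ξ ω k| :=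
        master1 (fun x => |x|) ξ hsw 0 1 k
      simp only [zero_add, one_mul, zero_mul, add_zero] at A
      rw [A, integral_const]
      simp
    have hnneg_of : ∀ k : Fin d, ∫ ω, ξ ω k = 1 → ∀ᵐ ω, 0 ≤ ξ ω k := by
      intro k hk
      have h0 : ∫ ω, (|ξ ω k| - ξ ω k) = 0 := by
        rw [integral_sub (hIi k).abs (hIi k), habs k, hk]
        ring
      have h1 := (integral_eq_zero_iff_of_nonneg_ae
        (Filter.Eventually.of_forall fun ω => sub_nonneg.mpr (le_abs_self _))
        ((hIi k).abs.sub (hIi k))).mp h0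
      filter_upwards [h1] with ω hω
      have h2 : |ξ ω k| - ξ ω k = 0 := hω
      have h3 : (0:ℝ) ≤ |ξ ω k| := abs_nonneg _
      linarith
    have hExpj : ∫ ω, ξ ω j = 1 := by
      have B : ∀ t : ℝ, ∫ ω, |t + (-1) * ξ ω j| = ∫ ω, |t + (-1) * ξ ω i| :=
        fun t => master2 (fun x => |x|) ξ hsw t (-1) i j
      have dec : ∀ (k : Fin d) (t : ℝ), ∫ ω, |t + (-1) * ξ ω k|
          = 2 * (∫ ω, max (ξ ω k - t) 0) - ((∫ ω, ξ ω k) - t) := by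
        intro k t
        have hY : Integrable (fun ω => t + (-1) * ξ ω k) :=
          (integrable_const t).add ((hIi k).const_mul (-1))
        rw [show ∫ ω, |t + (-1) * ξ ω k| = ∫ ω, |ξ ω k - t| from
          integral_congr_ae (Filter.Eventually.of_forall fun ω => by
            beta_reduce
            rw [show t + (-1) * ξ ω k = -(ξ ω k - t) from by ring, abs_neg]),
          int_abs_decomp (fun ω => ξ ω k - t) ((hIi k).sub (integrable_const t))]
        rw [integral_sub (hIi k) (integrable_const t), integral_const]
        simp [measure_univ]
        try ring
      have C : ∀ n : ℕ, (∫ ω, ξ ω j) - (∫ ω, ξ ω i)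
          = 2 * (∫ ω, max (ξ ω j - n) 0) - 2 * (∫ ω, max (ξ ω i - n) 0) := by
        intro n
        have := B n
        rw [dec j n, dec i n] at this
        linarith
      have h0' : Tendsto (fun n : ℕ =>
          2 * (∫ ω, max (ξ ω j - n) 0) - 2 * (∫ ω, max (ξ ω i - n) 0)) atTop (nhds 0) := by
        have := ((tail_posPart _ (hIm j) (hIi j)).const_mul 2).sub
          ((tail_posPart _ (hIm i) (hIi i)).const_mul 2)
        simpa using this
      have huniq := tendsto_nhds_unique (h0'.congr (fun n => (C n).symm)) tendsto_const_nhds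
      linarith
    have hnneg := hnneg_of j hExpj
    refine ⟨hnneg, hExpj, fun ε hε => ?_⟩
    have A : ∫ ω, |ε + (-1) * ξ ω j| = ∫ ω, |(-1:ℝ) + ε * ξ ω j| :=
      master1 (fun x => |x|) ξ hsw ε (-1) j
    have hY1 : Integrable (fun ω => ε + (-1) * ξ ω j) :=
      (integrable_const ε).add ((hIi j).const_mul (-1))
    have hY2 : Integrable (fun ω => (-1:ℝ) + ε * ξ ω j) :=
      (integrable_const (-1)).add ((hIi j).const_mul ε)
    have L1 : ∫ ω, |ε + (-1) * ξ ω j|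
        = 2 * (∫ ω, max (ε - ξ ω j) 0) - (ε - 1) := by
      rw [int_abs_decomp _ hY1]
      have e1 : ∫ ω, max (ε + (-1) * ξ ω j) 0 = ∫ ω, max (ε - ξ ω j) 0 :=
        int_max_congr _ _ (fun ω => by ring)
      have e2 : ∫ ω, (ε + (-1) * ξ ω j) = ε - 1 := by
        rw [integral_add (integrable_const ε) ((hIi j).const_mul (-1)), integral_const,
          integral_const_mul, hExpj]
        simp
        try ring
      rw [e1, e2]
    have L2 : ∫ ω, |(-1:ℝ) + ε * ξ ω j|
        = 2 * (∫ ω, max (ε * ξ ω j - 1) 0) - (ε - 1) := by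
      rw [int_abs_decomp _ hY2]
      have e1 : ∫ ω, max ((-1:ℝ) + ε * ξ ω j) 0 = ∫ ω, max (ε * ξ ω j - 1) 0 :=
        int_max_congr _ _ (fun ω => by ring)
      have e2 : ∫ ω, ((-1:ℝ) + ε * ξ ω j) = ε - 1 := by
        rw [integral_add (integrable_const (-1)) ((hIi j).const_mul ε), integral_const,
          integral_const_mul, hExpj]
        simp
        try ring
      rw [e1, e2]
    rw [L1, L2] at A
    linarith
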